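/- Suppose there exist real antisymmetric matrices M_A (2a×2a), M_B (2b×2b), Y, Z (antisymmetric), and a real matrix X (2a×2b) such that I + iM_A + (k₁−1)iZ ≥ 0, I + iM_A − iZ ≥ 0, I + iM_B − iY ≥ 0, and I + iM_B + (k₂−1)iY − k₁k₂ X^T (I + iM_A + (k₁−1)iZ)^{-1} X ≥ 0 (with the inverse existing). Then X^T X ≤ (4/(k₁k₂)) I. -/

import Mathlib

open Matrix Complex
open scoped ComplexOrder

private lemma smul_posSemidef {n : Type*} [Fintype n] (r : ℝ) (hr : 0 ≤ r)
    {M : Matrix n n ℂ} (hM : M.PosSemidef) : ((r : ℂ) • M).PosSemidef := by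
  refine Matrix.posSemidef_iff_dotProduct_mulVec.mpr ⟨?_, ?_⟩
  · have : ((r : ℂ) • M)ᴴ = (starRingEnd ℂ (r : ℂ)) • Mᴴ := Matrix.conjTranspose_smul _ _
    rw [Matrix.IsHermitian, this, hM.1.eq, Complex.conj_ofReal]
  · intro x
    rw [Matrix.smul_mulVec, dotProduct_smul, smul_eq_mul]
    exact mul_nonneg (Complex.zero_le_real.mpr hr) (hM.dotProduct_mulVec_nonneg x)

private lemma inv_add_inv_posSemidef {n : Type*} [Fintype n] [DecidableEq n]
    {A B : Matrix n n ℂ} (hA : A.PosDef) (hB : B.PosDef)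
    (hAB : A + B = (2 : ℂ) • 1) :
    (A⁻¹ + B⁻¹ - (2 : ℂ) • 1).PosSemidef := by
  have hdA : IsUnit A.det := Ne.isUnit hA.det_pos.ne'
  have hdB : IsUnit B.det := Ne.isUnit hB.det_pos.ne'
  have hA1 : A⁻¹ * A = 1 := Matrix.nonsing_inv_mul A hdA
  have hA2 : A * A⁻¹ = 1 := Matrix.mul_nonsing_inv A hdA
  have hB1 : B⁻¹ * B = 1 := Matrix.nonsing_inv_mul B hdB
  have hB2 : B * B⁻¹ = 1 := Matrix.mul_nonsing_inv B hdB
  have eA : (A⁻¹ - 1) * A * (A⁻¹ - 1) = A⁻¹ + A - (2 : ℂ) • 1 := by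
    have : (A⁻¹ - 1) * A * (A⁻¹ - 1)
        = A⁻¹ * A * A⁻¹ - A⁻¹ * A - A * A⁻¹ + A := by noncomm_ring
    rw [this, hA1, hA2, one_mul, two_smul]; abel
  have eB : (B⁻¹ - 1) * B * (B⁻¹ - 1) = B⁻¹ + B - (2 : ℂ) • 1 := by
    have : (B⁻¹ - 1) * B * (B⁻¹ - 1)
        = B⁻¹ * B * B⁻¹ - B⁻¹ * B - B * B⁻¹ + B := by noncomm_ring
    rw [this, hB1, hB2, one_mul, two_smul]; abel
  have hHA : (A⁻¹ - 1)ᴴ = A⁻¹ - 1 := by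
    rw [Matrix.conjTranspose_sub, Matrix.conjTranspose_one, hA.1.inv.eq]
  have hHB : (B⁻¹ - 1)ᴴ = B⁻¹ - 1 := by
    rw [Matrix.conjTranspose_sub, Matrix.conjTranspose_one, hB.1.inv.eq]
  have key : A⁻¹ + B⁻¹ - (2 : ℂ) • 1
      = (A⁻¹ - 1)ᴴ * A * (A⁻¹ - 1) + (B⁻¹ - 1)ᴴ * B * (B⁻¹ - 1) := by
    rw [hHA, hHB, eA, eB]
    have : A⁻¹ + A - (2:ℂ) • 1 + (B⁻¹ + B - (2:ℂ) • 1)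
        = A⁻¹ + B⁻¹ + (A + B) - (2:ℂ) • 1 - (2:ℂ) • 1 := by abel
    rw [this, hAB]; abel
  rw [key]
  exact (hA.posSemidef.conjTranspose_mul_mul_same _).add
    (hB.posSemidef.conjTranspose_mul_mul_same _)

private lemma dot_map {n : Type*} [Fintype n] (M : Matrix n n ℝ) (x : n → ℝ) :
    (fun i => ((x i : ℂ))) ⬝ᵥ ((M.map Complex.ofReal) *ᵥ (fun i => ((x i : ℂ))))
      = ((x ⬝ᵥ (M *ᵥ x) : ℝ) : ℂ) := by
  simp only [dotProduct, Matrix.mulVec, Matrix.map_apply]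
  push_cast
  ring

/-- If real antisymmetric `M_A, M_B, Y, Z` and a real `X` satisfy the four Schur-type
positivity conditions for `(k₁,k₂)`-extendibility, then `Xᵀ X ≤ (4/(k₁k₂)) I`. -/
theorem stmt7 (a b : ℕ) (k₁ k₂ : ℝ) (hk₁ : 1 ≤ k₁) (hk₂ : 1 ≤ k₂)
    (MA Z : Matrix (Fin (2 * a)) (Fin (2 * a)) ℝ)
    (MB Y : Matrix (Fin (2 * b)) (Fin (2 * b)) ℝ)
    (X : Matrix (Fin (2 * a)) (Fin (2 * b)) ℝ)
    (hMA : MAᵀ = -MA) (hZ : Zᵀ = -Z) (hMB : MBᵀ = -MB) (hY : Yᵀ = -Y)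
    (A : Matrix (Fin (2 * a)) (Fin (2 * a)) ℂ)
    (hAdef : A = 1 + Complex.I • (MA.map Complex.ofReal) +
      ((k₁ : ℂ) - 1) • (Complex.I • (Z.map Complex.ofReal)))
    (hApd : A.PosDef)
    (hc2 : ((1 : Matrix (Fin (2 * a)) (Fin (2 * a)) ℂ) +
      Complex.I • (MA.map Complex.ofReal) -
      Complex.I • (Z.map Complex.ofReal)).PosSemidef)
    (hc3 : ((1 : Matrix (Fin (2 * b)) (Fin (2 * b)) ℂ) +
      Complex.I • (MB.map Complex.ofReal) -
      Complex.I • (Y.map Complex.ofReal)).PosSemidef)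
    (hc4 : ((1 : Matrix (Fin (2 * b)) (Fin (2 * b)) ℂ) +
      Complex.I • (MB.map Complex.ofReal) +
      ((k₂ : ℂ) - 1) • (Complex.I • (Y.map Complex.ofReal)) -
      ((k₁ * k₂ : ℝ) : ℂ) •
        ((X.map Complex.ofReal)ᵀ * A⁻¹ * (X.map Complex.ofReal))).PosSemidef) :
    ((4 / (k₁ * k₂)) • (1 : Matrix (Fin (2 * b)) (Fin (2 * b)) ℝ) - Xᵀ * X).PosSemidef := by
  have hc : (0:ℝ) < k₁ * k₂ := mul_pos (lt_of_lt_of_le one_pos hk₁) (lt_of_lt_of_le one_pos hk₂)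
  set c : ℝ := k₁ * k₂ with hcdef
  set X' := X.map Complex.ofReal with hX'
  set MA' := MA.map Complex.ofReal with hMA'def
  set Z' := Z.map Complex.ofReal with hZ'def
  set MB' := MB.map Complex.ofReal with hMB'def
  set Y' := Y.map Complex.ofReal with hY'def
  have hMA' : MA'ᵀ = -MA' := by
    rw [hMA'def, ← Matrix.transpose_map, hMA]; ext i j; simp
  have hZ' : Z'ᵀ = -Z' := by
    rw [hZ'def, ← Matrix.transpose_map, hZ]; ext i j; simp
  have hMB' : MB'ᵀ = -MB' := by
    rw [hMB'def, ← Matrix.transpose_map, hMB]; ext i j; simp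
  have hY' : Y'ᵀ = -Y' := by
    rw [hY'def, ← Matrix.transpose_map, hY]; ext i j; simp
  -- Aᵀ = 2•1 - A
  have hAT : Aᵀ = (2 : ℂ) • 1 - A := by
    rw [hAdef]
    simp only [Matrix.transpose_add, Matrix.transpose_smul, Matrix.transpose_one, hMA', hZ']
    module
  set B : Matrix (Fin (2*a)) (Fin (2*a)) ℂ := (2 : ℂ) • 1 - A with hBdef
  have hBpd : B.PosDef := hAT ▸ hApd.transpose
  have hAB : A + B = (2 : ℂ) • 1 := by rw [hBdef]; abel
  -- transpose of condition 4
  have hinvT : (A⁻¹)ᵀ = B⁻¹ := by rw [Matrix.transpose_nonsing_inv, hAT]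
  have hc4T : ((1 : Matrix (Fin (2 * b)) (Fin (2 * b)) ℂ) - Complex.I • MB' -
      ((k₂ : ℂ) - 1) • (Complex.I • Y') - ((c:ℝ) : ℂ) • (X'ᵀ * B⁻¹ * X')).PosSemidef := by
    have h := hc4.transpose
    have heq : ((1 : Matrix (Fin (2 * b)) (Fin (2 * b)) ℂ) + Complex.I • MB' +
        ((k₂ : ℂ) - 1) • (Complex.I • Y') - ((c:ℝ) : ℂ) • (X'ᵀ * A⁻¹ * X'))ᵀ
        = (1 : Matrix (Fin (2 * b)) (Fin (2 * b)) ℂ) - Complex.I • MB' -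
          ((k₂ : ℂ) - 1) • (Complex.I • Y') - ((c:ℝ) : ℂ) • (X'ᵀ * B⁻¹ * X') := by
      simp only [Matrix.transpose_sub, Matrix.transpose_add, Matrix.transpose_smul,
        Matrix.transpose_one, Matrix.transpose_mul, Matrix.transpose_transpose, hMB', hY',
        Matrix.mul_assoc, hinvT]
      module
    rwa [heq] at h
  have hsum : ((2 : ℂ) • (1 : Matrix (Fin (2 * b)) (Fin (2 * b)) ℂ)
      - ((c:ℝ) : ℂ) • (X'ᵀ * A⁻¹ * X') - ((c:ℝ) : ℂ) • (X'ᵀ * B⁻¹ * X')).PosSemidef := by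
    have h := hc4.add hc4T
    have heq : ((1 : Matrix (Fin (2 * b)) (Fin (2 * b)) ℂ) + Complex.I • MB' +
        ((k₂ : ℂ) - 1) • (Complex.I • Y') - ((c:ℝ) : ℂ) • (X'ᵀ * A⁻¹ * X'))
        + ((1 : Matrix (Fin (2 * b)) (Fin (2 * b)) ℂ) - Complex.I • MB' -
        ((k₂ : ℂ) - 1) • (Complex.I • Y') - ((c:ℝ) : ℂ) • (X'ᵀ * B⁻¹ * X'))
        = (2 : ℂ) • (1 : Matrix (Fin (2 * b)) (Fin (2 * b)) ℂ)
          - ((c:ℝ) : ℂ) • (X'ᵀ * A⁻¹ * X') - ((c:ℝ) : ℂ) • (X'ᵀ * B⁻¹ * X') := by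
      module
    rwa [heq] at h
  -- the convexity term
  have hD : (A⁻¹ + B⁻¹ - (2 : ℂ) • 1).PosSemidef := inv_add_inv_posSemidef hApd hBpd hAB
  have hX'H : X'ᴴ = X'ᵀ := by
    ext i j; simp [hX', Matrix.conjTranspose_apply, Matrix.map_apply, Complex.conj_ofReal]
  have hE : (X'ᵀ * (A⁻¹ + B⁻¹ - (2 : ℂ) • 1) * X').PosSemidef := by
    have := hD.conjTranspose_mul_mul_same X'
    rwa [hX'H] at this
  have hcE := smul_posSemidef c hc.le hE
  -- combine
  have hW : ((2 : ℂ) • (1 : Matrix (Fin (2 * b)) (Fin (2 * b)) ℂ)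
      - ((2*c : ℝ) : ℂ) • (X'ᵀ * X')).PosSemidef := by
    have h := hsum.add hcE
    have heq : ((2 : ℂ) • (1 : Matrix (Fin (2 * b)) (Fin (2 * b)) ℂ)
        - ((c:ℝ) : ℂ) • (X'ᵀ * A⁻¹ * X') - ((c:ℝ) : ℂ) • (X'ᵀ * B⁻¹ * X'))
        + ((c:ℝ) : ℂ) • (X'ᵀ * (A⁻¹ + B⁻¹ - (2 : ℂ) • 1) * X')
        = (2 : ℂ) • (1 : Matrix (Fin (2 * b)) (Fin (2 * b)) ℂ)
          - ((2*c : ℝ) : ℂ) • (X'ᵀ * X') := by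
      have hexp : X'ᵀ * (A⁻¹ + B⁻¹ - (2 : ℂ) • 1) * X'
          = X'ᵀ * A⁻¹ * X' + X'ᵀ * B⁻¹ * X' - (2:ℂ) • (X'ᵀ * X') := by
        rw [Matrix.mul_sub, Matrix.mul_add, Matrix.sub_mul, Matrix.add_mul]
        simp [Matrix.mul_smul, Matrix.smul_mul, Matrix.mul_one]
      rw [hexp]
      push_cast
      module
    rwa [heq] at h
  -- identify with map of a real matrix
  have hWmap : ((2 : ℂ) • (1 : Matrix (Fin (2 * b)) (Fin (2 * b)) ℂ)
      - ((2*c : ℝ) : ℂ) • (X'ᵀ * X'))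
      = (((2:ℝ) • (1 : Matrix (Fin (2 * b)) (Fin (2 * b)) ℝ)
        - (2*c) • (Xᵀ * X)).map Complex.ofReal) := by
    ext i j
    simp [hX', Matrix.map_apply, Matrix.one_apply, Matrix.mul_apply, Matrix.transpose_apply,
      apply_ite (Complex.ofReal)]
    all_goals (push_cast; ring)
  rw [hWmap] at hW
  -- conclude over ℝ
  refine Matrix.posSemidef_iff_dotProduct_mulVec.mpr ⟨?_, ?_⟩
  · have h1 : (Xᵀ * X)ᴴ = Xᵀ * X := by
      ext i j; simp [Matrix.conjTranspose_apply, Matrix.mul_apply, mul_comm]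
    show _ = _
    rw [Matrix.conjTranspose_sub, Matrix.conjTranspose_smul, h1, Matrix.conjTranspose_one]
    simp
  · intro x
    have hq := hW.dotProduct_mulVec_nonneg (fun i => ((x i : ℂ)))
    have hstar : star (fun i => ((x i : ℂ))) = (fun i => ((x i : ℂ))) := by
      funext i; simp [Complex.conj_ofReal]
    rw [hstar, dot_map] at hq
    rw [Complex.zero_le_real] at hq
    have hq' : 0 ≤ 2 * (x ⬝ᵥ x) - (2*c) * (x ⬝ᵥ ((Xᵀ * X) *ᵥ x)) := by
      have : x ⬝ᵥ (((2:ℝ) • (1 : Matrix (Fin (2 * b)) (Fin (2 * b)) ℝ)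
          - (2*c) • (Xᵀ * X)) *ᵥ x)
          = 2 * (x ⬝ᵥ x) - (2*c) * (x ⬝ᵥ ((Xᵀ * X) *ᵥ x)) := by
        rw [Matrix.sub_mulVec, Matrix.smul_mulVec, Matrix.smul_mulVec,
          Matrix.one_mulVec, dotProduct_sub, dotProduct_smul,
          dotProduct_smul]
        simp [smul_eq_mul]
      rwa [this] at hq
    have hu : 0 ≤ x ⬝ᵥ x := Finset.sum_nonneg fun i _ => mul_self_nonneg _
    have hv : 0 ≤ ((X *ᵥ x) ⬝ᵥ (X *ᵥ x)) := Finset.sum_nonneg fun i _ => mul_self_nonneg _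
    have hgoal : star x ⬝ᵥ ((((4 / c) • (1 : Matrix (Fin (2 * b)) (Fin (2 * b)) ℝ)
        - Xᵀ * X)) *ᵥ x)
        = (4 / c) * (x ⬝ᵥ x) - (x ⬝ᵥ ((Xᵀ * X) *ᵥ x)) := by
      rw [star_trivial, Matrix.sub_mulVec, Matrix.smul_mulVec, Matrix.one_mulVec,
        dotProduct_sub, dotProduct_smul]
      simp [smul_eq_mul]
    rw [hgoal]
    have hcv : (x ⬝ᵥ ((Xᵀ * X) *ᵥ x)) ≤ (x ⬝ᵥ x) / c := by
      rw [le_div_iff₀ hc]; nlinarith [hq']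
    have h4 : (x ⬝ᵥ x) / c ≤ 4 / c * (x ⬝ᵥ x) := by
      rw [div_mul_eq_mul_div]
      gcongr
      linarith
    linarith
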